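/- A Hall 2'-subgroup of a finite metacyclic group is a normal subgroup. -/

import Mathlib

private lemma odd_of_dvd_nat {d n : ℕ} (h : d ∣ n) (hn : Odd n) : Odd d := by
  rcases Nat.even_or_odd d with hd | hd
  · exact absurd (hd.two_dvd.trans h) (by simpa [Nat.two_dvd_ne_zero, Nat.odd_iff] using hn)
  · exact hd

private lemma eq_one_of_odd_dvd_two_pow {d k : ℕ} (hd : Odd d) (h : d ∣ 2 ^ k) : d = 1 := by
  have h1 : Nat.Coprime d (2 ^ k) := (hd.coprime_two_right).pow_right k
  have := Nat.gcd_eq_left h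
  rw [h1] at this
  omega

private lemma odd_card_of_orders {G : Type*} [Group G] [Finite G]
    (h : ∀ x : G, Odd (orderOf x)) : Odd (Nat.card G) := by
  by_contra hc
  rw [Nat.not_odd_iff_even] at hc
  obtain ⟨x, hx⟩ := exists_prime_orderOf_dvd_card' 2 hc.two_dvd
  have := h x
  rw [hx] at this
  simp [Nat.odd_iff] at this

/-- A group `Y` is metacyclic if it has a cyclic normal subgroup `N`
such that `Y/N` is cyclic. -/
def IsMetacyclic (Y : Type*) [Group Y] : Prop :=
  ∃ N : Subgroup Y, ∃ _ : N.Normal, IsCyclic N ∧ IsCyclic (Y ⧸ N)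

/-- A Hall 2'-subgroup of a finite metacyclic group is a normal subgroup. -/
theorem hall_two_complement_normal_of_metacyclic
    {Y : Type*} [Group Y] [Finite Y] (hY : IsMetacyclic Y)
    (H : Subgroup Y) (hodd : Odd (Nat.card H)) (hindex : ∃ k : ℕ, H.index = 2 ^ k) :
    H.Normal := by
  obtain ⟨k, hk⟩ := hindex
  obtain ⟨N, hNnorm, hNc, hQc⟩ := hY
  haveI := hNnorm
  haveI := hNc
  haveI := hQc
  -- elements of N commute
  have hNcomm : ∀ x y : Y, x ∈ N → y ∈ N → x * y = y * x := by
    intro x y hx hy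
    have : (⟨x, hx⟩ : N) * ⟨y, hy⟩ = ⟨y, hy⟩ * ⟨x, hx⟩ :=
      (IsCyclic.commGroup (α := N)).mul_comm _ _
    exact congrArg Subtype.val this
  have hQcomm : ∀ a b : Y ⧸ N, a * b = b * a := fun a b =>
    (IsCyclic.commGroup (α := Y ⧸ N)).mul_comm a b
  -- maximality of H among odd-order overgroups
  have hmax : ∀ K : Subgroup Y, H ≤ K → Odd (Nat.card K) → K ≤ H := by
    intro K hHK hKodd
    have h1 : H.relIndex K ∣ 2 ^ k := hk ▸ Subgroup.relIndex_dvd_index_of_le hHK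
    have h2 : H.relIndex K ∣ Nat.card K := Subgroup.index_dvd_card (H.subgroupOf K)
    exact Subgroup.relIndex_eq_one.mp (eq_one_of_odd_dvd_two_pow (odd_of_dvd_nat h2 hKodd) h1)
  -- the odd part of N
  let C : Subgroup Y :=
    { carrier := {y | y ∈ N ∧ Odd (orderOf y)}
      one_mem' := ⟨N.one_mem, by simp⟩
      mul_mem' := by
        rintro a b ⟨ha, hoa⟩ ⟨hb, hob⟩
        refine ⟨N.mul_mem ha hb, ?_⟩
        have h1 : orderOf (a * b) ∣ Nat.lcm (orderOf a) (orderOf b) :=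
          (Commute.orderOf_mul_dvd_lcm (hNcomm a b ha hb))
        exact odd_of_dvd_nat h1 (odd_of_dvd_nat (Nat.lcm_dvd_mul _ _) (hoa.mul hob))
      inv_mem' := by
        rintro a ⟨ha, hoa⟩
        exact ⟨N.inv_mem ha, by simpa using hoa⟩ }
  have hCmem : ∀ {y : Y}, y ∈ C ↔ y ∈ N ∧ Odd (orderOf y) := Iff.rfl
  have hCnorm : C.Normal := by
    constructor
    rintro a ⟨haN, hao⟩ g
    refine ⟨hNnorm.conj_mem a haN g, ?_⟩
    have hsc : SemiconjBy g a (g * a * g⁻¹) := by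
      show g * a = g * a * g⁻¹ * g
      group
    exact hsc.orderOf_eq ▸ hao
  -- the 2-part of N
  let P : Subgroup Y :=
    { carrier := {y | y ∈ N ∧ ∃ j : ℕ, y ^ 2 ^ j = 1}
      one_mem' := ⟨N.one_mem, 0, by simp⟩
      mul_mem' := by
        rintro a b ⟨ha, j, hj⟩ ⟨hb, l, hl⟩
        refine ⟨N.mul_mem ha hb, j + l, ?_⟩
        have hc : Commute a b := hNcomm a b ha hb
        rw [hc.mul_pow, pow_add, pow_mul, hj, one_pow, one_mul, mul_comm (2^j), pow_mul, hl,
          one_pow]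
      inv_mem' := by
        rintro a ⟨ha, j, hj⟩
        exact ⟨N.inv_mem ha, j, by rw [inv_pow, hj, inv_one]⟩ }
  have hPle : P ≤ N := fun y hy => hy.1
  have hPnorm : P.Normal := by
    constructor
    rintro a ⟨haN, j, hj⟩ g
    exact ⟨hNnorm.conj_mem a haN g, j, by rw [conj_pow, hj, mul_one, mul_inv_cancel]⟩
  haveI := hPnorm
  -- P is a cyclic 2-group
  haveI : IsCyclic P := Subgroup.isCyclic_of_le hPle
  have hP2 : IsPGroup 2 P := by
    rintro ⟨y, hyN, j, hj⟩
    exact ⟨j, Subtype.ext (by simpa using hj)⟩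
  obtain ⟨n, hPcard⟩ := (IsPGroup.iff_card (p := 2)).mp hP2
  haveI : Finite (MulAut P) :=
    Finite.of_injective (fun e => (e : P → P)) DFunLike.coe_injective
  have hAut : ∃ m : ℕ, Nat.card (MulAut P) = 2 ^ m := by
    rw [IsCyclic.card_mulAut, hPcard]
    rcases Nat.eq_zero_or_pos n with rfl | hn
    · exact ⟨0, by simp⟩
    · exact ⟨n - 1, by rw [Nat.totient_prime_pow Nat.prime_two hn]; norm_num⟩
  -- H centralizes P
  have hHP : ∀ x ∈ H, ∀ p ∈ P, x * p * x⁻¹ = p := by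
    intro x hx p hp
    obtain ⟨m, hm⟩ := hAut
    set φ : MulAut P := MulAut.conjNormal x with hφ
    have h1 : orderOf φ ∣ orderOf x := orderOf_map_dvd MulAut.conjNormal x
    have h2 : orderOf x ∣ Nat.card H := Subgroup.orderOf_dvd_natCard H hx
    have h3 : orderOf φ ∣ 2 ^ m := hm ▸ orderOf_dvd_natCard φ
    have h4 : φ = 1 := orderOf_eq_one_iff.mp
      (eq_one_of_odd_dvd_two_pow (odd_of_dvd_nat (h1.trans h2) hodd) h3)
    have h5 : φ ⟨p, hp⟩ = ⟨p, hp⟩ := by rw [h4]; rfl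
    have := congrArg Subtype.val h5
    rwa [hφ, MulAut.conjNormal_apply] at this
  -- decomposition of elements of N
  have hdecomp : ∀ y ∈ N, ∃ c ∈ C, ∃ p ∈ P, y = c * p := by
    intro y hy
    set r := orderOf y with hr
    have hrpos : 0 < r := orderOf_pos y
    set a := r.factorization 2 with ha
    set m := r / 2 ^ a with hm
    have hrm : 2 ^ a * m = r := Nat.ordProj_mul_ordCompl_eq_self r 2
    have hmodd : Odd m := Nat.odd_iff.mpr
      (Nat.two_dvd_ne_zero.mp (Nat.not_dvd_ordCompl Nat.prime_two hrpos.ne'))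
    set u := Nat.gcdA (2 ^ a) m with hu
    set v := Nat.gcdB (2 ^ a) m with hv
    have hbez : (1 : ℤ) = 2 ^ a * u + m * v := by
      have hcop : Nat.Coprime (2 ^ a) m := (Nat.coprime_two_left.mpr hmodd).pow_left a
      have := Nat.gcd_eq_gcd_ab (2 ^ a) m
      rw [hcop] at this
      push_cast at this ⊢
      linarith
    set c := y ^ ((2 ^ a : ℕ) * u : ℤ) with hc
    set p := y ^ ((m : ℕ) * v : ℤ) with hp
    have hyr : y ^ (r : ℤ) = 1 := by
      rw [zpow_natCast]; exact pow_orderOf_eq_one y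
    have hcm : c ^ m = 1 := by
      rw [hc, ← zpow_natCast, ← zpow_mul]
      have : ((2 ^ a : ℕ) : ℤ) * u * (m : ℕ) = (r : ℤ) * u := by
        rw [← hrm]; push_cast; ring
      rw [this, zpow_mul, hyr, one_zpow]
    have hpm : p ^ 2 ^ a = 1 := by
      rw [hp, ← zpow_natCast, ← zpow_mul]
      have : ((m : ℕ) : ℤ) * v * ((2 : ℕ) ^ a : ℕ) = (r : ℤ) * v := by
        rw [← hrm]; push_cast; ring
      rw [this, zpow_mul, hyr, one_zpow]
    refine ⟨c, ⟨N.zpow_mem hy _, odd_of_dvd_nat (orderOf_dvd_of_pow_eq_one hcm) hmodd⟩,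
      p, ⟨N.zpow_mem hy _, a, hpm⟩, ?_⟩
    have hsum : ((2 ^ a : ℕ) : ℤ) * u + ((m : ℕ) : ℤ) * v = 1 := by
      push_cast at hbez ⊢
      linarith
    rw [hc, hp, ← zpow_add, hsum, zpow_one]
  -- commutators of H with N lie in C
  have hcommC : ∀ x ∈ H, ∀ y ∈ N, x * y * x⁻¹ * y⁻¹ ∈ C := by
    intro x hx y hy
    obtain ⟨c, hcC, p, hpP, rfl⟩ := hdecomp y hy
    have hxp := hHP x hx p hpP
    have key : x * (c * p) * x⁻¹ * (c * p)⁻¹ = (x * c * x⁻¹) * (x * p * x⁻¹ * p⁻¹) * c⁻¹ := by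
      group
    rw [key, hxp]
    simp only [mul_inv_cancel, mul_one]
    exact C.mul_mem (hCnorm.conj_mem c hcC x) (C.inv_mem hcC)
  -- C has odd order
  have hCodd : Odd (Nat.card C) := by
    apply odd_card_of_orders
    intro x
    have : orderOf (x : Y) = orderOf x := orderOf_injective C.subtype Subtype.coe_injective x
    exact this ▸ x.2.2
  -- C ≤ H
  have hCH : C ≤ H := by
    haveI := hCnorm
    have hq : Nat.card (↥(H ⊔ C)) = (C.subgroupOf (H ⊔ C)).index * Nat.card (C.subgroupOf (H ⊔ C)) :=
      (Subgroup.index_mul_card (C.subgroupOf (H ⊔ C))).symm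
    have h1 : (C.subgroupOf (H ⊔ C)).index = (C.subgroupOf H).index := by
      have := Nat.card_congr (QuotientGroup.quotientInfEquivProdNormalQuotient H C).toEquiv
      simpa [Subgroup.index] using this.symm
    have h2 : Nat.card (C.subgroupOf (H ⊔ C)) = Nat.card C :=
      Nat.card_congr (Subgroup.subgroupOfEquivOfLe (le_sup_right : C ≤ H ⊔ C)).toEquiv
    have h3 : (C.subgroupOf H).index ∣ Nat.card H := Subgroup.index_dvd_card _
    have hsupodd : Odd (Nat.card (↥(H ⊔ C))) := by
      rw [hq, h1, h2]
      exact (odd_of_dvd_nat h3 hodd).mul hCodd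
    exact le_sup_right.trans (hmax (H ⊔ C) le_sup_left hsupodd)
  -- the odd part of Y/N
  let Dbar : Subgroup (Y ⧸ N) :=
    { carrier := {q | Odd (orderOf q)}
      one_mem' := by simp
      mul_mem' := by
        intro a b ha hb
        have h1 : orderOf (a * b) ∣ Nat.lcm (orderOf a) (orderOf b) :=
          (Commute.orderOf_mul_dvd_lcm (hQcomm a b))
        exact odd_of_dvd_nat h1 (odd_of_dvd_nat (Nat.lcm_dvd_mul _ _) (ha.mul hb))
      inv_mem' := by
        intro a ha
        simpa using ha }
  have hDbarnorm : Dbar.Normal := by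
    constructor
    intro a ha g
    have : g * a * g⁻¹ = a := by rw [hQcomm g a]; group
    rwa [this]
  have hDbarodd : Odd (Nat.card Dbar) := by
    apply odd_card_of_orders
    intro x
    have : orderOf (x : Y ⧸ N) = orderOf x :=
      orderOf_injective Dbar.subtype Subtype.coe_injective x
    exact this ▸ x.2
  -- image of H is all of Dbar
  have hmaple : H.map (QuotientGroup.mk' N) ≤ Dbar := by
    rintro q ⟨h, hh, rfl⟩
    exact odd_of_dvd_nat ((orderOf_map_dvd (QuotientGroup.mk' N) h).trans
      (Subgroup.orderOf_dvd_natCard H hh)) hodd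
  have hmapeq : Dbar ≤ H.map (QuotientGroup.mk' N) := by
    have h1 : (H.map (QuotientGroup.mk' N)).relIndex Dbar ∣ 2 ^ k := by
      refine dvd_trans (Subgroup.relIndex_dvd_index_of_le hmaple) ?_
      rw [← hk]
      exact Subgroup.index_map_dvd H (QuotientGroup.mk'_surjective N)
    have h2 : (H.map (QuotientGroup.mk' N)).relIndex Dbar ∣ Nat.card Dbar :=
      Subgroup.index_dvd_card _
    exact Subgroup.relIndex_eq_one.mp
      (eq_one_of_odd_dvd_two_pow (odd_of_dvd_nat h2 hDbarodd) h1)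
  -- D, the preimage
  set D : Subgroup Y := Dbar.comap (QuotientGroup.mk' N) with hD
  have hDnorm : D.Normal := hDbarnorm.comap _
  have hHD : H ≤ D := fun h hh => hmaple ⟨h, hh, rfl⟩
  -- D normalizes H
  have hDnormalizes : ∀ d ∈ D, ∀ x ∈ H, d * x * d⁻¹ ∈ H := by
    intro d hd x hx
    obtain ⟨h, hh, hhd⟩ := hmapeq hd
    have hnN : h⁻¹ * d ∈ N := by
      have : (h : Y ⧸ N) = (d : Y ⧸ N) := hhd
      exact QuotientGroup.eq.mp this
    set w := h⁻¹ * d with hw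
    have hdw : d = h * w := by rw [hw]; group
    have hwx : w * x * w⁻¹ ∈ H := by
      have h1 : x⁻¹ * w * x * w⁻¹ ∈ C := by
        have := hcommC x⁻¹ (H.inv_mem hx) w hnN
        simpa [mul_assoc] using this
      have h2 : w * x * w⁻¹ = x * (x⁻¹ * w * x * w⁻¹) := by group
      rw [h2]
      exact H.mul_mem hx (hCH h1)
    have : d * x * d⁻¹ = h * (w * x * w⁻¹) * h⁻¹ := by rw [hdw]; group
    rw [this]
    exact H.mul_mem (H.mul_mem hh hwx) (H.inv_mem hh)
  -- conclude
  haveI hHsub : (H.subgroupOf D).Normal := by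
    constructor
    rintro ⟨a, haD⟩ ha ⟨d, hdD⟩
    exact Subgroup.mem_subgroupOf.mpr (hDnormalizes d hdD a (Subgroup.mem_subgroupOf.mp ha))
  constructor
  intro x hx g
  have hgD : g * x * g⁻¹ ∈ D := hDnorm.conj_mem x (hHD hx) g
  set q : D ⧸ H.subgroupOf D := QuotientGroup.mk (⟨g * x * g⁻¹, hgD⟩ : D) with hq
  have h1 : orderOf q ∣ orderOf (⟨g * x * g⁻¹, hgD⟩ : D) :=
    orderOf_map_dvd (QuotientGroup.mk' (H.subgroupOf D)) _
  have h2 : orderOf (⟨g * x * g⁻¹, hgD⟩ : D) = orderOf (g * x * g⁻¹) :=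
    (orderOf_injective D.subtype Subtype.coe_injective _).symm
  have h3 : orderOf (g * x * g⁻¹) = orderOf x := by
    have hsc : SemiconjBy g x (g * x * g⁻¹) := by
      show g * x = g * x * g⁻¹ * g
      group
    exact (SemiconjBy.orderOf_eq g hsc).symm
  have hqodd : Odd (orderOf q) := by
    refine odd_of_dvd_nat ?_ hodd
    rw [h2, h3] at h1
    exact h1.trans (Subgroup.orderOf_dvd_natCard H hx)
  have hq2 : orderOf q ∣ 2 ^ k := by
    have : orderOf q ∣ Nat.card (D ⧸ H.subgroupOf D) := orderOf_dvd_natCard q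
    have hrel : Nat.card (D ⧸ H.subgroupOf D) = H.relIndex D := rfl
    rw [hrel] at this
    exact this.trans (hk ▸ Subgroup.relIndex_dvd_index_of_le hHD)
  have : q = 1 := orderOf_eq_one_iff.mp (eq_one_of_odd_dvd_two_pow hqodd hq2)
  have hmem : (⟨g * x * g⁻¹, hgD⟩ : D) ∈ H.subgroupOf D :=
    (QuotientGroup.eq_one_iff _).mp this
  exact Subgroup.mem_subgroupOf.mp hmem
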